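/- Let H be an inner product space and x_1,…,x_n ∈ H. Then (∑_{i=1}^n ‖x_i‖)² ≤ ‖∑_{i=1}^n x_i‖² + (n(n²−1)/6) · ∑_{k=1}^{n−1} ‖Δx_k‖², where Δx_k := x_{k+1} − x_k. -/

import Mathlib

open Finset RCLike

section
variable {𝕜 H : Type*} [RCLike 𝕜] [NormedAddCommGroup H] [InnerProductSpace 𝕜 H]

lemma gauss_Icc (n : ℕ) : ∑ j ∈ Icc 1 n, (j : ℝ) = n * (n + 1) / 2 := by
  induction n with
  | zero => simp
  | succ n ih =>
    rw [Finset.sum_Icc_succ_top (by omega)]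
    push_cast
    rw [ih]; ring

lemma abs_sum_Icc (n : ℕ) :
    ∑ i ∈ Icc 1 n, ∑ j ∈ Icc 1 n, |(i : ℝ) - j| = n * ((n:ℝ) ^ 2 - 1) / 3 := by
  induction n with
  | zero => simp
  | succ n ih =>
    have hsplit : ∀ i ∈ Icc 1 n, ∑ j ∈ Icc 1 (n+1), |(i : ℝ) - j|
        = (∑ j ∈ Icc 1 n, |(i : ℝ) - j|) + ((n:ℝ) + 1 - i) := by
      intro i hi
      simp only [mem_Icc] at hi
      rw [Finset.sum_Icc_succ_top (by omega)]
      have : |(i : ℝ) - (n+1 : ℕ)| = (n:ℝ) + 1 - i := by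
        rw [abs_sub_comm, abs_of_nonneg]
        · push_cast; ring
        · push_cast; have : (i:ℝ) ≤ n := by exact_mod_cast hi.2
          linarith
      rw [this]
    have htop : ∑ j ∈ Icc 1 (n+1), |((n+1 : ℕ) : ℝ) - j|
        = (∑ j ∈ Icc 1 n, ((n:ℝ) + 1 - j)) := by
      rw [Finset.sum_Icc_succ_top (by omega)]
      rw [sub_self, abs_zero, add_zero]
      apply Finset.sum_congr rfl
      intro j hj
      simp only [mem_Icc] at hj
      rw [abs_of_nonneg]
      · push_cast; ring
      · push_cast; have : (j:ℝ) ≤ n := by exact_mod_cast hj.2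
        linarith
    rw [Finset.sum_Icc_succ_top (by omega), Finset.sum_congr rfl hsplit, htop,
      Finset.sum_add_distrib, ih]
    simp only [Finset.sum_sub_distrib, Finset.sum_const, nsmul_eq_mul, gauss_Icc, Nat.card_Icc]
    push_cast
    ring

lemma telescope (x : ℕ → H) (i j : ℕ) (hij : i ≤ j) :
    x j - x i = ∑ k ∈ Ico i j, (x (k + 1) - x k) := by
  rw [Finset.sum_Ico_eq_sum_range]
  have h := Finset.sum_range_sub (fun k => x (i + k)) (j - i)
  have e1 : i + (j - i) = j := by omega
  rw [e1] at h
  rw [show (∑ k ∈ Finset.range (j - i), (x (i + k + 1) - x (i + k)))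
      = ∑ k ∈ Finset.range (j - i), (x (i + (k + 1)) - x (i + k)) from by
    rfl, h]
  simp

lemma key_bound (n : ℕ) (x : ℕ → H) (i j : ℕ) (hi : i ∈ Icc 1 n) (hj : j ∈ Icc 1 n)
    (hij : i ≤ j) :
    ‖x j - x i‖ ^ 2 ≤ ((j:ℝ) - i) * ∑ k ∈ Icc 1 (n - 1), ‖x (k + 1) - x k‖ ^ 2 := by
  simp only [mem_Icc] at hi hj
  rw [telescope x i j hij]
  calc ‖∑ k ∈ Ico i j, (x (k + 1) - x k)‖ ^ 2
      ≤ (∑ k ∈ Ico i j, ‖x (k + 1) - x k‖) ^ 2 := by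
        exact pow_le_pow_left₀ (norm_nonneg _) (norm_sum_le _ _) 2
    _ ≤ (#(Ico i j) : ℝ) * ∑ k ∈ Ico i j, ‖x (k + 1) - x k‖ ^ 2 := by
        exact sq_sum_le_card_mul_sum_sq
    _ ≤ ((j:ℝ) - i) * ∑ k ∈ Icc 1 (n - 1), ‖x (k + 1) - x k‖ ^ 2 := by
        apply mul_le_mul
        · rw [Nat.card_Ico, Nat.cast_sub hij]
        · apply Finset.sum_le_sum_of_subset_of_nonneg
          · intro k hk
            simp only [mem_Ico, mem_Icc] at hk ⊢
            omega
          · intros; positivity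
        · positivity
        · have : (i:ℝ) ≤ j := by exact_mod_cast hij
          linarith

end

theorem stmt_13 {𝕜 H : Type*} [RCLike 𝕜] [NormedAddCommGroup H] [InnerProductSpace 𝕜 H]
    (n : ℕ) (x : ℕ → H) :
    (∑ i ∈ Finset.Icc 1 n, ‖x i‖) ^ 2 ≤ ‖∑ i ∈ Finset.Icc 1 n, x i‖ ^ 2 +
      ((n : ℝ) * ((n : ℝ) ^ 2 - 1) / 6) *
        ∑ k ∈ Finset.Icc 1 (n - 1), ‖x (k + 1) - x k‖ ^ 2 := by
  set S := ∑ k ∈ Finset.Icc 1 (n - 1), ‖x (k + 1) - x k‖ ^ 2 with hS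
  have hS0 : 0 ≤ S := by positivity
  have hnormsq : ‖∑ i ∈ Finset.Icc 1 n, x i‖ ^ 2
      = ∑ i ∈ Icc 1 n, ∑ j ∈ Icc 1 n, re (inner 𝕜 (x i) (x j) : 𝕜) := by
    rw [← @inner_self_eq_norm_sq 𝕜, sum_inner]
    rw [map_sum]
    apply Finset.sum_congr rfl
    intro i _
    rw [inner_sum, map_sum]
  have hsq : (∑ i ∈ Finset.Icc 1 n, ‖x i‖) ^ 2
      = ∑ i ∈ Icc 1 n, ∑ j ∈ Icc 1 n, ‖x i‖ * ‖x j‖ := by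
    rw [sq, Finset.sum_mul_sum]
  have hterm : ∀ i ∈ Icc 1 n, ∀ j ∈ Icc 1 n,
      ‖x i‖ * ‖x j‖ - re (inner 𝕜 (x i) (x j) : 𝕜) ≤ (|(i:ℝ) - j| / 2) * S := by
    intro i hi j hj
    have h1 : ‖x i - x j‖ ^ 2 = ‖x i‖ ^ 2 - 2 * re (inner 𝕜 (x i) (x j) : 𝕜) + ‖x j‖ ^ 2 :=
      @norm_sub_sq 𝕜 _ _ _ _ (x i) (x j)
    have h2 : ‖x i - x j‖ ^ 2 ≤ |(i:ℝ) - j| * S := by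
      rcases le_total i j with hij | hij
      · rw [norm_sub_rev]
        have := key_bound n x i j hi hj hij
        have habs : |(i:ℝ) - j| = (j:ℝ) - i := by
          rw [abs_sub_comm, abs_of_nonneg]
          have : (i:ℝ) ≤ j := by exact_mod_cast hij
          linarith
        rw [habs]; exact this
      · have := key_bound n x j i hj hi hij
        have habs : |(i:ℝ) - j| = (i:ℝ) - j := by
          rw [abs_of_nonneg]
          have : (j:ℝ) ≤ i := by exact_mod_cast hij
          linarith
        rw [habs]; exact this
    nlinarith [sq_nonneg (‖x i‖ - ‖x j‖)]
  rw [hsq, hnormsq]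
  have hmain : ∑ i ∈ Icc 1 n, ∑ j ∈ Icc 1 n, ‖x i‖ * ‖x j‖
      - ∑ i ∈ Icc 1 n, ∑ j ∈ Icc 1 n, re (inner 𝕜 (x i) (x j) : 𝕜)
      ≤ ∑ i ∈ Icc 1 n, ∑ j ∈ Icc 1 n, (|(i:ℝ) - j| / 2) * S := by
    rw [← Finset.sum_sub_distrib]
    apply Finset.sum_le_sum
    intro i hi
    rw [← Finset.sum_sub_distrib]
    apply Finset.sum_le_sum
    intro j hj
    exact hterm i hi j hj
  have hval : ∑ i ∈ Icc 1 n, ∑ j ∈ Icc 1 n, (|(i:ℝ) - j| / 2) * S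
      = ((n : ℝ) * ((n : ℝ) ^ 2 - 1) / 6) * S := by
    simp only [← Finset.sum_mul, ← Finset.sum_div]
    rw [abs_sum_Icc]
    ring
  linarith
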